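/- For every integer d ≥ 2 and every ℓ ∈ 𝔤_d* with ℓ(Z_1) ≠ 0, the tangent space of the coadjoint orbit at ℓ satisfies {ad*_X ℓ : X ∈ 𝔤_d} = {ad*_X ℓ : X ∈ span(Y_1, Y_3, …, Y_{2d−1}, X_1, …, X_d)}; that is, every coadjoint tangent vector at ℓ is realized by an element of the 2d-dimensional subspace spanned by Y_{2k−1} and X_k, k = 1,…,d. -/

import Mathlib

/-- The coadjoint action of the Lie algebra: `(coad X f) W = f ⁅W, X⁆`. -/
def coad {L : Type*} [LieRing L] [LieAlgebra ℝ L] (X : L) (f : Module.Dual ℝ L) :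
    Module.Dual ℝ L where
  toFun W := f ⁅W, X⁆
  map_add' a b := by simp [add_lie]
  map_smul' c a := by simp [smul_lie]

/-- The set `{ad*_X ℓ : X ∈ 𝔤, ℓ ∈ 𝔤*}` of all coadjoint tangent vectors. -/
def adStar (L : Type*) [LieRing L] [LieAlgebra ℝ L] : Set (Module.Dual ℝ L) :=
  {g | ∃ (X : L) (ℓ : Module.Dual ℝ L), g = coad X ℓ}

/-- Coordinates of a linear functional with respect to the dual basis of `B`;
this identifies `𝔤*` with `ι → ℝ`, carrying the canonical topology. -/
noncomputable def coords {ι : Type*} {L : Type*} [LieRing L] [LieAlgebra ℝ L]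
    (B : Module.Basis ι ℝ L) (f : Module.Dual ℝ L) : ι → ℝ := fun a => f (B a)

/-- The cortex `Cor(𝔤*)`: the closure (in the canonical topology of the
finite-dimensional space `𝔤*`, transported to coordinates via the dual basis)
of the set `{ad*_X ℓ : X ∈ 𝔤, ℓ ∈ 𝔤*}`. -/
def corSet {ι : Type*} {L : Type*} [LieRing L] [LieAlgebra ℝ L] (B : Module.Basis ι ℝ L) :
    Set (Module.Dual ℝ L) :=
  {f | coords B f ∈ closure (coords B '' adStar L)}

/-- Index type for the basis of `𝔤_d`: first component indexes `Z_1,…,Z_d`, the second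
the odd `Y`'s `Y_1, Y_3, …, Y_{2d-1}`, the third the even `Y`'s `Y_2, Y_4, …, Y_{2d}`,
and the fourth `X_1,…,X_d`. -/
abbrev Idx (d : ℕ) : Type := Fin d ⊕ (Fin d ⊕ (Fin d ⊕ Fin d))

/-- Index of `Z_{i+1}`. -/
def zI {d : ℕ} (i : Fin d) : Idx d := Sum.inl i
/-- Index of `Y_{2i+1}` (odd-indexed `Y`). -/
def yoI {d : ℕ} (i : Fin d) : Idx d := Sum.inr (Sum.inl i)
/-- Index of `Y_{2i+2}` (even-indexed `Y`). -/
def yeI {d : ℕ} (i : Fin d) : Idx d := Sum.inr (Sum.inr (Sum.inl i))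
/-- Index of `X_{i+1}`. -/
def xI {d : ℕ} (i : Fin d) : Idx d := Sum.inr (Sum.inr (Sum.inr i))

/-- Value of `⁅X_{i+1}, Y_{2i+2}⁆`: `Z_{i+2}` if `i + 1 < d`, and `Z_2 + ⋯ + Z_d`
if `i + 1 = d`. -/
def gdW {d : ℕ} (hd : 2 ≤ d) {V : Type*} [AddCommGroup V] (B : Idx d → V) (i : Fin d) : V :=
  if h : (i : ℕ) < d - 1 then B (zI ⟨(i : ℕ) + 1, by omega⟩)
  else ∑ m ∈ Finset.univ.filter (fun m : Fin d => 0 < (m : ℕ)), B (zI m)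

/-- The bracket `⁅B a, B b⁆` of two basis vectors of `𝔤_d`, given by the structure
constants: `⁅X_i, Y_{2i-1}⁆ = Z_1` for `i = 1,…,d`, `⁅X_k, Y_{2k}⁆ = Z_{k+1}` for
`k = 1,…,d-1`, `⁅X_d, Y_{2d}⁆ = Z_2 + ⋯ + Z_d`, all other brackets of basis
vectors being zero (up to antisymmetry). -/
def gdBr {d : ℕ} (hd : 2 ≤ d) {V : Type*} [AddCommGroup V] (B : Idx d → V) :
    Idx d → Idx d → V
  | Sum.inr (Sum.inr (Sum.inr i)), Sum.inr (Sum.inl j) =>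
      if i = j then B (zI ⟨0, by omega⟩) else 0
  | Sum.inr (Sum.inl j), Sum.inr (Sum.inr (Sum.inr i)) =>
      if i = j then -(B (zI ⟨0, by omega⟩)) else 0
  | Sum.inr (Sum.inr (Sum.inr i)), Sum.inr (Sum.inr (Sum.inl j)) =>
      if i = j then gdW hd B i else 0
  | Sum.inr (Sum.inr (Sum.inl j)), Sum.inr (Sum.inr (Sum.inr i)) =>
      if i = j then -(gdW hd B i) else 0
  | _, _ => 0

/-- The homogeneous polynomial `Q_d` of degree `d`, evaluated at the odd coordinates
`ηo` (`ηo i = η_{2i+1}`) and the even coordinates `ηe` (`ηe i = η_{2i+2}`):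
`Q_d = η_{2d-1}·Σ_{i=1}^{d-1}(η_{2i}·∏_{j=1, j≠i}^{d-1} η_{2j-1})
      − η_{2d}·∏_{j=1}^{d-1} η_{2j-1}`. -/
def Qd (d : ℕ) (hd : 2 ≤ d) (ηo ηe : Fin d → ℝ) : ℝ :=
  ηo ⟨d - 1, by omega⟩ *
      (∑ i ∈ Finset.univ.filter (fun i : Fin d => (i : ℕ) < d - 1),
        ηe i * ∏ j ∈ Finset.univ.filter (fun j : Fin d => (j : ℕ) < d - 1 ∧ j ≠ i), ηo j)
    - ηe ⟨d - 1, by omega⟩ *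
        ∏ j ∈ Finset.univ.filter (fun j : Fin d => (j : ℕ) < d - 1), ηo j


/-- `coad · ℓ` as a linear map in `X`. -/
noncomputable def coadL {L : Type*} [LieRing L] [LieAlgebra ℝ L] (ℓ : Module.Dual ℝ L) :
    L →ₗ[ℝ] Module.Dual ℝ L where
  toFun X := coad X ℓ
  map_add' a b := by ext W; simp [coad, lie_add]
  map_smul' c a := by ext W; simp [coad, lie_smul]

/-- For every `d ≥ 2` and `ℓ ∈ 𝔤_d*` with `ℓ(Z_1) ≠ 0`, every coadjoint
tangent vector `ad*_X ℓ` is already realized by some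
`X ∈ span(Y_1, Y_3, …, Y_{2d−1}, X_1, …, X_d)`. -/
theorem tangent_space_gd (d : ℕ) (hd : 2 ≤ d) (L : Type) [LieRing L] [LieAlgebra ℝ L]
    (B : Module.Basis (Idx d) ℝ L)
    (hbr : ∀ a b : Idx d, ⁅B a, B b⁆ = gdBr hd (fun c => B c) a b)
    (ℓ : Module.Dual ℝ L) (hℓ : ℓ (B (zI ⟨0, by omega⟩)) ≠ 0) :
    {g : Module.Dual ℝ L | ∃ X : L, g = coad X ℓ}
      = {g : Module.Dual ℝ L |
          ∃ X ∈ Submodule.span ℝ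
              ((Set.range fun i : Fin d => B (yoI i)) ∪
                (Set.range fun i : Fin d => B (xI i))),
            g = coad X ℓ} := by
    classical
  ext g
  simp only [Set.mem_setOf_eq]
  constructor
  · rintro ⟨X, rfl⟩
    set V : Submodule ℝ L := Submodule.span ℝ
        ((Set.range fun i : Fin d => B (yoI i)) ∪
          (Set.range fun i : Fin d => B (xI i))) with hV
    suffices h : coadL ℓ X ∈ Submodule.map (coadL ℓ) V by
      obtain ⟨X', hX', hEq⟩ := h
      exact ⟨X', hX', hEq.symm⟩
    have hz1 : ∀ i : Fin d, coadL ℓ (B (zI i)) = 0 := by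
      intro i
      apply B.ext
      intro w
      have : ⁅B w, B (zI i)⁆ = 0 := by
        rw [hbr]
        rcases w with j | j | j | j <;> rfl
      simp [coadL, coad, this]
    have hye : ∀ i : Fin d,
        coadL ℓ (B (yeI i)) =
          (ℓ (gdW hd (fun c => B c) i) / ℓ (B (zI ⟨0, by omega⟩))) • coadL ℓ (B (yoI i)) := by
      intro i
      apply B.ext
      intro w
      simp only [coadL, coad, LinearMap.coe_mk, AddHom.coe_mk, LinearMap.smul_apply,
        smul_eq_mul]
      rw [hbr, hbr]
      rcases w with j | j | j | j
      · simp [gdBr, zI, yoI, yeI]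
      · simp [gdBr, yoI, yeI]
      · simp [gdBr, yoI, yeI]
      · show ℓ (gdBr hd (fun c => B c) (xI j) (yeI i)) = _ * ℓ (gdBr hd (fun c => B c) (xI j) (yoI i))
        simp only [gdBr, xI, yeI, yoI]
        by_cases hji : j = i
        · subst hji
          simp only [if_pos rfl, ↓reduceIte]
          field_simp
        · simp [hji]
    rw [← B.sum_repr X, map_sum]
    apply Submodule.sum_mem
    rintro (i | i | i | i) -
    · have e : (Sum.inl i : Idx d) = zI i := rfl
      rw [e, map_smul, hz1]
      simp
    · rw [map_smul]
      exact Submodule.smul_mem _ _ (Submodule.mem_map_of_mem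
        (Submodule.subset_span (Or.inl ⟨i, rfl⟩)))
    · have e : (Sum.inr (Sum.inr (Sum.inl i)) : Idx d) = yeI i := rfl
      rw [e, map_smul, hye]
      exact Submodule.smul_mem _ _ (Submodule.smul_mem _ _
        (Submodule.mem_map_of_mem (Submodule.subset_span (Or.inl ⟨i, rfl⟩))))
    · rw [map_smul]
      exact Submodule.smul_mem _ _ (Submodule.mem_map_of_mem
        (Submodule.subset_span (Or.inr ⟨i, rfl⟩)))
  · rintro ⟨X, -, rfl⟩
    exact ⟨X, rfl⟩
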